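/- Let ω ~ N(0, σ⁻²I_d) and δ ~ Uniform(0, 2π] be independent. Then for any x, x' ∈ ℝ^d: E[2·cos(⟨x, ω⟩ + δ)·cos(⟨x', ω⟩ + δ)] = E[cos(⟨x - x', ω⟩)] = exp(-‖x - x'‖²/(2σ²)). -/

import Mathlib

open MeasureTheory ProbabilityTheory Real NNReal

section RFFHelpers

open ENNReal Complex in
private lemma rff_gauss_char (v : ℝ≥0) (hv : v ≠ 0) (t : ℝ) :
    ∫ x : ℝ, Complex.exp (t * x * Complex.I) ∂(gaussianReal 0 v) =
      Complex.exp (-(v : ℝ) * t ^ 2 / 2) := by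
  have hvpos : (0:ℝ) < v := lt_of_le_of_ne v.2 (by exact_mod_cast (Ne.symm hv))
  have hvC : ((v:ℝ) : ℂ) ≠ 0 := by exact_mod_cast ne_of_gt hvpos
  rw [gaussianReal_of_var_ne_zero _ hv]
  unfold gaussianPDF
  have hm : Measurable fun x => (gaussianPDFReal 0 v x).toNNReal :=
    (measurable_gaussianPDFReal 0 v).real_toNNReal
  rw [show (fun x => ENNReal.ofReal (gaussianPDFReal 0 v x))
      = fun x => ((fun y => (gaussianPDFReal 0 v y).toNNReal) x : ℝ≥0∞) from rfl,
    integral_withDensity_eq_integral_smul hm]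
  have hsmul : ∀ x : ℝ, (gaussianPDFReal 0 v x).toNNReal • Complex.exp (t * x * Complex.I)
      = ((Real.sqrt (2 * π * v) : ℝ)⁻¹ : ℂ) *
        Complex.exp (-(2 * (v:ℝ) : ℂ)⁻¹ * x ^ 2 + (t * Complex.I) * x + 0) := by
    intro x
    rw [NNReal.smul_def, Real.coe_toNNReal _ (gaussianPDFReal_nonneg 0 v x)]
    unfold gaussianPDFReal
    rw [real_smul]
    push_cast
    rw [mul_assoc, ← Complex.exp_add]
    congr 2
    field_simp
    ring
  simp_rw [hsmul]
  rw [integral_const_mul, integral_cexp_quadratic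
    (by simp [hvpos, inv_pos] : (-(2 * (v:ℝ) : ℂ)⁻¹).re < 0)]
  have h1 : (↑π / -(-(2 * (v:ℝ) : ℂ)⁻¹)) = ((2 * π * (v:ℝ) : ℝ) : ℂ) := by
    rw [neg_neg]
    push_cast
    field_simp
  rw [h1]
  have hcpow : (((2 * π * (v:ℝ) : ℝ) : ℂ)) ^ (1/2 : ℂ) = ((Real.sqrt (2 * π * v) : ℝ) : ℂ) := by
    have := Complex.ofReal_cpow (show (0:ℝ) ≤ 2 * π * v by positivity) (1/2 : ℝ)
    rw [← Real.sqrt_eq_rpow] at this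
    push_cast at this ⊢
    exact this.symm
  rw [hcpow, ← mul_assoc, ← Complex.ofReal_inv, ← Complex.ofReal_mul,
    inv_mul_cancel₀ (by positivity : Real.sqrt (2 * π * v) ≠ 0)]
  rw [Complex.ofReal_one, one_mul]
  congr 1
  have : ((t:ℂ) * Complex.I) ^ 2 = -(t^2 : ℝ) := by
    push_cast
    rw [mul_pow, Complex.I_sq]
    ring
  rw [this]
  push_cast
  field_simp
  ring

open ENNReal Complex in
set_option maxHeartbeats 1000000 in
private lemma rff_gauss_cos (d : ℕ) (v : ℝ≥0) (hv : v ≠ 0) (z : Fin d → ℝ) :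
    ∫ w : Fin d → ℝ, Real.cos (∑ i, z i * w i) ∂(Measure.pi fun _ => gaussianReal 0 v) =
      Real.exp (-(v:ℝ) * (∑ i, z i ^ 2) / 2) := by
  letI : MeasureSpace ℝ := ⟨gaussianReal 0 v⟩
  haveI h0 : IsProbabilityMeasure (volume : Measure ℝ) :=
    show IsProbabilityMeasure (gaussianReal 0 v) by infer_instance
  haveI : SigmaFinite (volume : Measure ℝ) := by infer_instance
  haveI : IsProbabilityMeasure (volume : Measure (Fin d → ℝ)) := by
    exact MeasureTheory.Measure.pi.instIsProbabilityMeasure _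
  have hvol : (volume : Measure (Fin d → ℝ)) = Measure.pi fun _ => gaussianReal 0 v := rfl
  rw [← hvol]
  set f : (Fin d → ℝ) → ℂ := fun w => Complex.exp ((∑ i, z i * w i : ℝ) * Complex.I) with hf
  have hcont : Continuous f := by
    apply Complex.continuous_exp.comp
    exact (Complex.continuous_ofReal.comp (by continuity)).mul continuous_const
  have hint : Integrable f volume := by
    refine (integrable_const (1:ℝ)).mono' hcont.aestronglyMeasurable ?_
    filter_upwards with w
    simp only [hf]
    exact le_of_eq (Complex.norm_exp_ofReal_mul_I _)
  have hre : ∀ w, Real.cos (∑ i, z i * w i) = (f w).re := fun w =>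
    (Complex.exp_ofReal_mul_I_re _).symm
  simp_rw [hre]
  have h1 : ∫ w, (f w).re = (∫ w, f w).re := by
    have := integral_re hint
    simpa using this
  rw [h1]
  have h2 : ∀ w : Fin d → ℝ, f w = ∏ i, Complex.exp ((z i : ℂ) * (w i) * Complex.I) := by
    intro w
    have hx : ((∑ i, z i * w i : ℝ) : ℂ) * Complex.I = ∑ i, (z i : ℂ) * (w i) * Complex.I := by
      push_cast
      rw [Finset.sum_mul]
    show Complex.exp _ = _
    rw [hx, Complex.exp_sum]
  rw [show f = fun w => ∏ i, Complex.exp ((z i : ℂ) * (w i) * Complex.I) from funext h2]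
  rw [MeasureTheory.integral_fintype_prod_volume_eq_prod (f := fun (i : Fin d) (x : ℝ) =>
    Complex.exp ((z i : ℂ) * x * Complex.I))]
  have h3 : ∀ i : Fin d, (∫ x : ℝ, Complex.exp ((z i : ℂ) * x * Complex.I)) =
      Complex.exp (-(v : ℝ) * (z i) ^ 2 / 2) := fun i => rff_gauss_char v hv (z i)
  rw [Finset.prod_congr rfl fun i _ => h3 i, ← Complex.exp_sum]
  have : (∑ i, (-(v : ℝ) * (z i) ^ 2 / 2 : ℂ)) = ((-(v:ℝ) * (∑ i, z i ^ 2) / 2 : ℝ) : ℂ) := by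
    push_cast
    rw [Finset.mul_sum, Finset.sum_div]
  rw [this, ← Complex.ofReal_exp, Complex.ofReal_re]

open ENNReal in
private lemma rff_unif_cos (a b : ℝ) :
    ∫ δ, 2 * Real.cos (a + δ) * Real.cos (b + δ)
      ∂((ENNReal.ofReal (2 * π))⁻¹ • volume.restrict (Set.Ioc 0 (2 * π))) =
    Real.cos (a - b) := by
  have h2π : (0:ℝ) < 2 * π := by positivity
  rw [integral_smul_measure, ENNReal.toReal_inv, ENNReal.toReal_ofReal h2π.le,
    ← intervalIntegral.integral_of_le h2π.le]
  have key : ∀ δ : ℝ, 2 * Real.cos (a + δ) * Real.cos (b + δ)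
      = Real.cos (a - b) + Real.cos (a + b + 2 * δ) := by
    intro δ
    rw [show a - b = (a + δ) - (b + δ) by ring, show a + b + 2 * δ = (a + δ) + (b + δ) by ring,
      Real.cos_sub (a + δ) (b + δ), Real.cos_add (a + δ) (b + δ)]
    ring
  have hderiv : ∀ δ ∈ Set.uIcc (0:ℝ) (2 * π), HasDerivAt
      (fun s => Real.cos (a - b) * s + Real.sin (a + b + 2 * s) / 2)
      (2 * Real.cos (a + δ) * Real.cos (b + δ)) δ := by
    intro δ _
    have h1 : HasDerivAt (fun s : ℝ => a + b + 2 * s) 2 δ := by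
      simpa using ((hasDerivAt_id δ).const_mul 2).const_add (a + b)
    have h2 := ((Real.hasDerivAt_sin (a + b + 2 * δ)).comp δ h1).div_const 2
    have h4 : HasDerivAt (fun s : ℝ => Real.cos (a - b) * s) (Real.cos (a - b)) δ := by
      simpa using (hasDerivAt_id δ).const_mul (Real.cos (a - b))
    have := h4.add h2
    rw [key δ]
    refine this.congr_deriv ?_
    ring
  rw [intervalIntegral.integral_eq_sub_of_hasDerivAt hderiv
    (Continuous.intervalIntegrable (by continuity) _ _)]
  have hsin : Real.sin (a + b + 2 * (2 * π)) = Real.sin (a + b) := by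
    have := Real.sin_add_int_mul_two_pi (a + b) 2
    push_cast at this
    rw [← this]
  rw [hsin]
  field_simp
  rw [smul_eq_mul, mul_zero, mul_zero, zero_add, add_zero, add_sub_cancel_right]
  field_simp

end RFFHelpers

set_option maxHeartbeats 1000000 in
/-- Single-feature unbiasedness of random Fourier features for the RBF kernel: for
ω ~ N(0, σ⁻²I_d) and δ ~ Uniform(0, 2π] independent,
E[2cos(⟨x,ω⟩+δ)cos(⟨x',ω⟩+δ)] = E[cos⟨x-x', ω⟩] = exp(-‖x-x'‖²/(2σ²)). -/
theorem stmt_10 {Ω : Type*} [MeasurableSpace Ω] (P : Measure Ω) [IsProbabilityMeasure P]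
    (d : ℕ) (σ : ℝ≥0) (hσ : 0 < σ)
    (W : Ω → Fin d → ℝ) (Δ : Ω → ℝ) (hmW : Measurable W) (hmΔ : Measurable Δ)
    (hW : Measure.map W P = Measure.pi fun _ : Fin d => gaussianReal 0 (σ⁻¹ ^ 2))
    (hΔ : Measure.map Δ P =
      (ENNReal.ofReal (2 * π))⁻¹ • volume.restrict (Set.Ioc 0 (2 * π)))
    (hind : IndepFun W Δ P)
    (x x' : Fin d → ℝ) :
    (∫ ω, 2 * Real.cos ((∑ i, x i * W ω i) + Δ ω) *
        Real.cos ((∑ i, x' i * W ω i) + Δ ω) ∂P =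
      ∫ ω, Real.cos (∑ i, (x i - x' i) * W ω i) ∂P) ∧
    (∫ ω, Real.cos (∑ i, (x i - x' i) * W ω i) ∂P =
      Real.exp (-(∑ i, (x i - x' i) ^ 2) / (2 * (σ : ℝ) ^ 2))) := by
  have hσ' : σ⁻¹ ^ 2 ≠ 0 := by positivity
  set μd : Measure (Fin d → ℝ) := Measure.pi fun _ : Fin d => gaussianReal 0 (σ⁻¹ ^ 2) with hμd
  set ν : Measure ℝ := (ENNReal.ofReal (2 * π))⁻¹ • volume.restrict (Set.Ioc 0 (2 * π)) with hν
  have h2π : (0:ℝ) < 2 * π := by positivity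
  haveI : IsProbabilityMeasure ν := by
    constructor
    rw [hν]
    simp only [Measure.smul_apply, Measure.restrict_apply MeasurableSet.univ, Set.univ_inter,
      Real.volume_Ioc, smul_eq_mul, sub_zero]
    exact ENNReal.inv_mul_cancel (by simp [h2π, Real.pi_pos]) ENNReal.ofReal_ne_top
  haveI : IsProbabilityMeasure μd := by
    rw [hμd]; infer_instance
  -- the RHS of part 1 equals the integral against μd
  have hz : ∀ w : Fin d → ℝ, (∑ i, x i * w i) - (∑ i, x' i * w i)
      = ∑ i, (x i - x' i) * w i := by
    intro w
    rw [← Finset.sum_sub_distrib]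
    exact Finset.sum_congr rfl fun i _ => (sub_mul _ _ _).symm
  have hcos_cont : Continuous fun w : Fin d → ℝ => Real.cos (∑ i, (x i - x' i) * w i) :=
    Real.continuous_cos.comp (continuous_finset_sum _ fun i _ => continuous_const.mul (continuous_apply i))
  have hRHS : ∫ ω, Real.cos (∑ i, (x i - x' i) * W ω i) ∂P
      = ∫ w, Real.cos (∑ i, (x i - x' i) * w i) ∂μd := by
    rw [← hW]
    exact (integral_map hmW.aemeasurable hcos_cont.aestronglyMeasurable).symm
  constructor
  · -- part 1
    set G : (Fin d → ℝ) × ℝ → ℝ := fun p =>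
      2 * Real.cos ((∑ i, x i * p.1 i) + p.2) * Real.cos ((∑ i, x' i * p.1 i) + p.2) with hG
    have harg : ∀ y : Fin d → ℝ, Continuous fun p : (Fin d → ℝ) × ℝ => (∑ i, y i * p.1 i) + p.2 :=
      fun y => (continuous_finset_sum _ fun i _ =>
        continuous_const.mul ((continuous_apply i).comp continuous_fst)).add continuous_snd
    have hGc : Continuous G :=
      (continuous_const.mul (Real.continuous_cos.comp (harg x))).mul
        (Real.continuous_cos.comp (harg x'))
    have hmap : Measure.map (fun ω => (W ω, Δ ω)) P = μd.prod ν := by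
      rw [← hW, ← hΔ]
      exact (ProbabilityTheory.indepFun_iff_map_prod_eq_prod_map_map
        hmW.aemeasurable hmΔ.aemeasurable).mp hind
    have hLHS : ∫ ω, 2 * Real.cos ((∑ i, x i * W ω i) + Δ ω) *
        Real.cos ((∑ i, x' i * W ω i) + Δ ω) ∂P = ∫ p, G p ∂(μd.prod ν) := by
      rw [← hmap, integral_map (hmW.prodMk hmΔ).aemeasurable hGc.aestronglyMeasurable]
    rw [hLHS, hRHS]
    have hGint : Integrable G (μd.prod ν) := by
      refine (integrable_const (2:ℝ)).mono' hGc.aestronglyMeasurable ?_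
      filter_upwards with p
      rw [Real.norm_eq_abs, hG]
      have h1 := Real.abs_cos_le_one ((∑ i, x i * p.1 i) + p.2)
      have h2 := Real.abs_cos_le_one ((∑ i, x' i * p.1 i) + p.2)
      calc |2 * Real.cos ((∑ i, x i * p.1 i) + p.2) * Real.cos ((∑ i, x' i * p.1 i) + p.2)|
          = 2 * (|Real.cos ((∑ i, x i * p.1 i) + p.2)| * |Real.cos ((∑ i, x' i * p.1 i) + p.2)|) := by
            rw [abs_mul, abs_mul]; simp [mul_assoc]
        _ ≤ 2 * (1 * 1) := by
            gcongr
        _ = 2 := by norm_num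
    rw [MeasureTheory.integral_prod _ hGint]
    have hinner : ∀ w : Fin d → ℝ, (∫ δ, G (w, δ) ∂ν)
        = Real.cos (∑ i, (x i - x' i) * w i) := by
      intro w
      have h := rff_unif_cos (∑ i, x i * w i) (∑ i, x' i * w i)
      rw [← hν, hz w] at h
      simpa only [hG] using h
    simp_rw [hinner]
  · -- part 2
    rw [hRHS, hμd, rff_gauss_cos d _ hσ' _]
    congr 1
    have : ((σ⁻¹ ^ 2 : ℝ≥0) : ℝ) = ((σ:ℝ)^2)⁻¹ := by
      push_cast
      rw [inv_pow]
    rw [this, neg_mul, neg_div, neg_div, neg_inj, inv_mul_eq_div, div_div,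
      mul_comm ((σ:ℝ)^2) 2]
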